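/- The coefficients of the main characteristic polynomial m_G of a graph G are rational numbers (indeed integers): if μ is a main eigenvalue of G then every algebraic conjugate of μ over ℚ that is an eigenvalue of G is also main, so m_G ∈ ℤ[x]. -/

import Mathlib

open Matrix Polynomial

/-- `μ` is a main eigenvalue of the matrix `A`. -/
def Matrix.IsMainEig {n : ℕ} (A : Matrix (Fin n) (Fin n) ℝ) (μ : ℝ) : Prop :=
  ∃ v : Fin n → ℝ, A *ᵥ v = μ • v ∧ v ⬝ᵥ (fun _ => (1 : ℝ)) ≠ 0

namespace MainEigAux

variable {n : ℕ}

lemma pow_mulVec_eig (A : Matrix (Fin n) (Fin n) ℝ) {μ : ℝ} {v : Fin n → ℝ}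
    (hv : A *ᵥ v = μ • v) (k : ℕ) : A ^ k *ᵥ v = μ ^ k • v := by
  induction k with
  | zero => simp
  | succ k ih =>
    rw [pow_succ, ← Matrix.mulVec_mulVec, hv, Matrix.mulVec_smul, ih, pow_succ,
      smul_smul]
    rw [mul_comm]

lemma aeval_mulVec_eq_sum (A : Matrix (Fin n) (Fin n) ℝ) (p : ℝ[X]) (w : Fin n → ℝ)
    {D : ℕ} (hD : p.natDegree < D) :
    aeval A p *ᵥ w = ∑ k ∈ Finset.range D, p.coeff k • (A ^ k *ᵥ w) := by
  rw [aeval_eq_sum_range' hD]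
  induction (Finset.range D) using Finset.induction_on with
  | empty => simp
  | insert _ _ h ih =>
    rw [Finset.sum_insert h, Finset.sum_insert h, Matrix.add_mulVec, ih,
      Matrix.smul_mulVec]

lemma aeval_mulVec_eig (A : Matrix (Fin n) (Fin n) ℝ) {μ : ℝ} {v : Fin n → ℝ}
    (hv : A *ᵥ v = μ • v) (p : ℝ[X]) : aeval A p *ᵥ v = p.eval μ • v := by
  rw [aeval_mulVec_eq_sum A p v (Nat.lt_succ_self _), Polynomial.eval_eq_sum_range' (Nat.lt_succ_self _), Finset.sum_smul]
  refine Finset.sum_congr rfl fun k _ => ?_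
  rw [pow_mulVec_eig A hv k, smul_smul]

lemma transpose_aeval (A : Matrix (Fin n) (Fin n) ℝ) (hA : Aᵀ = A) (p : ℝ[X]) :
    (aeval A p)ᵀ = aeval A p := by
  rw [aeval_eq_sum_range]
  rw [Matrix.transpose_sum]
  refine Finset.sum_congr rfl fun k _ => ?_
  rw [Matrix.transpose_smul, Matrix.transpose_pow, hA]

lemma dot_aeval (A : Matrix (Fin n) (Fin n) ℝ) (hA : Aᵀ = A) {μ : ℝ} {v : Fin n → ℝ}
    (hv : A *ᵥ v = μ • v) (p : ℝ[X]) (w : Fin n → ℝ) :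
    v ⬝ᵥ (aeval A p *ᵥ w) = p.eval μ * (v ⬝ᵥ w) := by
  have h1 : v ᵥ* aeval A p = aeval A p *ᵥ v := by
    rw [← transpose_aeval A hA p, Matrix.vecMul_transpose, transpose_aeval A hA p]
  rw [Matrix.dotProduct_mulVec, h1, aeval_mulVec_eig A hv p, smul_dotProduct,
    smul_eq_mul]

/-- The ideal of real polynomials `p` with `p(A) 𝟙 = 0`. -/
noncomputable def krylovIdeal (A : Matrix (Fin n) (Fin n) ℝ) : Ideal ℝ[X] where
  carrier := {p | aeval A p *ᵥ (fun _ => (1 : ℝ)) = 0}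
  add_mem' := by
    intro p q hp hq
    simp only [Set.mem_setOf_eq, map_add, Matrix.add_mulVec] at *
    rw [hp, hq, add_zero]
  zero_mem' := by simp
  smul_mem' := by
    intro q p hp
    simp only [Set.mem_setOf_eq, smul_eq_mul, _root_.map_mul] at *
    rw [← Matrix.mulVec_mulVec, hp, Matrix.mulVec_zero]

lemma mem_krylovIdeal {A : Matrix (Fin n) (Fin n) ℝ} {p : ℝ[X]} :
    p ∈ krylovIdeal A ↔ aeval A p *ᵥ (fun _ => (1 : ℝ)) = 0 := Iff.rfl

/-- ℚ-injectivity of a rational matrix transfers to ℝ. -/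
lemma mulVec_inj_transfer {m d : ℕ} (M : Matrix (Fin m) (Fin d) ℚ)
    (hM : ∀ a : Fin d → ℚ, M *ᵥ a = 0 → a = 0)
    (c : Fin d → ℝ) (hc : M.map (algebraMap ℚ ℝ) *ᵥ c = 0) : c = 0 := by
  have hker : LinearMap.ker (Matrix.toLin' M) = ⊥ := by
    rw [LinearMap.ker_eq_bot']
    intro a ha
    exact hM a (by simpa [Matrix.toLin'_apply] using ha)
  obtain ⟨g, hg⟩ := (Matrix.toLin' M).exists_leftInverse_of_injective hker
  have hNM : LinearMap.toMatrix' g * M = 1 := by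
    have := congrArg LinearMap.toMatrix' hg
    rwa [LinearMap.toMatrix'_comp, LinearMap.toMatrix'_toLin', LinearMap.toMatrix'_id] at this
  have h1 : (LinearMap.toMatrix' g).map (algebraMap ℚ ℝ) * M.map (algebraMap ℚ ℝ) = 1 := by
    rw [← Matrix.map_mul, hNM, Matrix.map_one _ (map_zero _) (map_one _)]
  calc c = ((LinearMap.toMatrix' g).map (algebraMap ℚ ℝ) * M.map (algebraMap ℚ ℝ)) *ᵥ c := by
            rw [h1, Matrix.one_mulVec]
    _ = (LinearMap.toMatrix' g).map (algebraMap ℚ ℝ) *ᵥ (M.map (algebraMap ℚ ℝ) *ᵥ c) :=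
            (Matrix.mulVec_mulVec _ _ _).symm
    _ = 0 := by rw [hc, Matrix.mulVec_zero]

lemma coeff_sum_fin {F : Type*} [Semiring F] {d : ℕ} (a : Fin d → F) (m : ℕ) (hm : m < d) :
    (∑ k : Fin d, C (a k) * X ^ (k : ℕ)).coeff m = a ⟨m, hm⟩ := by
  rw [Polynomial.finset_sum_coeff]
  rw [Finset.sum_eq_single_of_mem (⟨m, hm⟩ : Fin d) (Finset.mem_univ _)]
  · simp
  · intro k _ hk
    rw [Polynomial.coeff_C_mul, Polynomial.coeff_X_pow, if_neg, mul_zero]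
    exact fun h => hk (Fin.ext h.symm)

end MainEigAux

open MainEigAux

/-- The main characteristic polynomial `m_G(x) = ∏ (x - μ)` over the distinct main
eigenvalues of a graph `G` has integer coefficients: it is the image of a polynomial
in `ℤ[x]`. -/
theorem mainCharPoly_integer_coefficients {n : ℕ} (G : SimpleGraph (Fin n))
    [DecidableRel G.Adj] (A : Matrix (Fin n) (Fin n) ℝ) (hA : A = G.adjMatrix ℝ)
    (S : Finset ℝ) (hS : ∀ μ, μ ∈ S ↔ A.IsMainEig μ) :
    ∃ q : Polynomial ℤ, q.map (algebraMap ℤ ℝ) = ∏ μ ∈ S, (X - C μ) := by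
  classical
  set φ := algebraMap ℚ ℝ with hφ
  set B := G.adjMatrix ℚ with hB
  have hBA : B.map φ = A := by
    rw [hA]
    ext i j
    simp [hB, Matrix.map_apply, SimpleGraph.adjMatrix_apply, apply_ite φ]
  have hAT : Aᵀ = A := by rw [hA]; exact G.transpose_adjMatrix
  set jR : Fin n → ℝ := fun _ => 1 with hjR
  set jQ : Fin n → ℚ := fun _ => 1 with hjQ
  -- rationality of Krylov vectors
  have hKry : ∀ (k : ℕ) (i : Fin n), φ ((B ^ k *ᵥ jQ) i) = (A ^ k *ᵥ jR) i := by
    intro k i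
    have hpow : (B ^ k).map φ = A ^ k := by
      rw [← hBA]
      have : B.map φ = φ.mapMatrix B := rfl
      rw [this, ← map_pow]
      rfl
    rw [← hpow]
    simp [Matrix.mulVec, dotProduct, Matrix.map_apply, map_sum, hjQ, hjR]
  -- the rational ideal
  set IQ : Ideal ℚ[X] := Ideal.comap (mapRingHom φ) (krylovIdeal A) with hIQ
  have hmemIQ : ∀ p : ℚ[X], p ∈ IQ ↔ aeval A (p.map φ) *ᵥ jR = 0 := by
    intro p
    rw [hIQ, Ideal.mem_comap, coe_mapRingHom, mem_krylovIdeal]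
  have hcharB : B.charpoly ∈ IQ := by
    rw [hmemIQ, ← Matrix.charpoly_map, hBA, Matrix.aeval_self_charpoly, Matrix.zero_mulVec]
  -- monic generator f of IQ
  set g₀ := Submodule.IsPrincipal.generator IQ with hg₀
  have hg₀ne : g₀ ≠ 0 := by
    intro h0
    have := (Submodule.IsPrincipal.mem_iff_generator_dvd IQ).mp hcharB
    rw [← hg₀, h0, zero_dvd_iff] at this
    exact B.charpoly_monic.ne_zero this
  set f := g₀ * C g₀.leadingCoeff⁻¹ with hf
  have hfmonic : f.Monic := Polynomial.monic_mul_leadingCoeff_inv hg₀ne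
  have hfmem : f ∈ IQ := Ideal.mul_mem_right _ _ (Submodule.IsPrincipal.generator_mem IQ)
  have hfdvd : ∀ p ∈ IQ, f ∣ p := by
    intro p hp
    have h1 : g₀ ∣ p := (Submodule.IsPrincipal.mem_iff_generator_dvd IQ).mp hp
    refine dvd_trans ⟨C g₀.leadingCoeff, ?_⟩ h1
    rw [hf, mul_assoc, ← Polynomial.C_mul, inv_mul_cancel₀ (Polynomial.leadingCoeff_ne_zero.mpr hg₀ne), Polynomial.C_1, mul_one]
  set d := f.natDegree with hd
  set fR := f.map φ with hfR
  have hfRmonic : fR.Monic := hfmonic.map φ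
  have hfRdeg : fR.natDegree = d := by rw [hfR, Polynomial.natDegree_map]
  have hfRmem : aeval A fR *ᵥ jR = 0 := (hmemIQ f).mp hfmem
  set g : ℝ[X] := ∏ μ ∈ S, (X - C μ) with hg
  have hgmonic : g.Monic := Polynomial.monic_prod_of_monic _ _ fun μ _ => Polynomial.monic_X_sub_C μ
  -- Step (a) : g ∣ fR
  have hgdvd : g ∣ fR := by
    refine Finset.prod_dvd_of_coprime ?_ ?_
    · intro μ hμ ν hν hne
      exact Polynomial.isCoprime_X_sub_C_of_isUnit_sub (sub_ne_zero_of_ne hne).isUnit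
    · intro μ hμ
      obtain ⟨v, hv, hvj⟩ := (hS μ).mp hμ
      rw [Polynomial.dvd_iff_isRoot, Polynomial.IsRoot]
      have h2 := dot_aeval A hAT hv fR jR
      rw [hfRmem, dotProduct_zero] at h2
      exact (mul_eq_zero.mp h2.symm).resolve_right hvj
  -- Step (b) : g(A) j = 0, via the spectral theorem
  have hH : A.IsHermitian := by
    rw [hA]
    ext i j
    simp [Matrix.conjTranspose_apply, SimpleGraph.adjMatrix_apply, SimpleGraph.adj_comm]
  have hgmem : aeval A g *ᵥ jR = 0 := by
    set u := aeval A g *ᵥ jR with hu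
    have key : ∀ i : Fin n, ⇑(hH.eigenvectorBasis i) ⬝ᵥ u = 0 := by
      intro i
      have he := hH.mulVec_eigenvectorBasis i
      rw [hu, dot_aeval A hAT he g jR]
      by_cases hmem : hH.eigenvalues i ∈ S
      · rw [Polynomial.eval_prod, Finset.prod_eq_zero hmem (by simp), zero_mul]
      · have hnm : ¬ A.IsMainEig (hH.eigenvalues i) := fun h => hmem ((hS _).mpr h)
        rw [Matrix.IsMainEig] at hnm
        push_neg at hnm
        simp only [hjR]
        rw [hnm _ he, mul_zero]
    have hstar : star (hH.eigenvectorUnitary : Matrix (Fin n) (Fin n) ℝ) *ᵥ u = 0 := by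
      funext j
      have h3 : (star (hH.eigenvectorUnitary : Matrix (Fin n) (Fin n) ℝ) *ᵥ u) j
          = ⇑(hH.eigenvectorBasis j) ⬝ᵥ u := by
        simp [Matrix.mulVec, dotProduct, Matrix.star_apply,
          Matrix.IsHermitian.eigenvectorUnitary_apply]
      rw [h3, key j]
      rfl
    have hUU : (hH.eigenvectorUnitary : Matrix (Fin n) (Fin n) ℝ) *
        star (hH.eigenvectorUnitary : Matrix (Fin n) (Fin n) ℝ) = 1 :=
      (hH.eigenvectorUnitary).prop.2
    calc u = ((hH.eigenvectorUnitary : Matrix (Fin n) (Fin n) ℝ) *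
              star (hH.eigenvectorUnitary : Matrix (Fin n) (Fin n) ℝ)) *ᵥ u := by
            rw [hUU, Matrix.one_mulVec]
      _ = (hH.eigenvectorUnitary : Matrix (Fin n) (Fin n) ℝ) *ᵥ
            (star (hH.eigenvectorUnitary : Matrix (Fin n) (Fin n) ℝ) *ᵥ u) :=
            (Matrix.mulVec_mulVec _ _ _).symm
      _ = 0 := by rw [hstar, Matrix.mulVec_zero]
  -- the Krylov matrix over ℚ
  set M : Matrix (Fin n) (Fin d) ℚ := Matrix.of (fun i k => (B ^ (k : ℕ) *ᵥ jQ) i) with hM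
  have hMik : ∀ (i : Fin n) (k : Fin d), M i k = (B ^ (k : ℕ) *ᵥ jQ) i := fun i k => rfl
  have hMinj : ∀ a : Fin d → ℚ, M *ᵥ a = 0 → a = 0 := by
    intro a ha
    set p₀ : ℚ[X] := ∑ k : Fin d, C (a k) * X ^ (k : ℕ) with hp₀
    by_cases h0 : p₀ = 0
    · funext k
      have h1 := coeff_sum_fin a (k : ℕ) k.2
      rw [← hp₀, h0] at h1
      simpa using h1.symm
    · exfalso
      have hdeg : p₀.natDegree < d := by
        rw [Polynomial.natDegree_lt_iff_degree_lt h0]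
        exact Polynomial.degree_sum_fin_lt a
      have hmem : p₀ ∈ IQ := by
        rw [hmemIQ]
        have hdeg' : (p₀.map φ).natDegree < d :=
          lt_of_le_of_lt Polynomial.natDegree_map_le hdeg
        rw [aeval_mulVec_eq_sum A _ jR hdeg']
        funext i
        have hterm : ∀ k : Fin d,
            (p₀.map φ).coeff (k : ℕ) * ((A ^ (k : ℕ) *ᵥ jR) i) = φ (M i k * a k) := by
          intro k
          rw [Polynomial.coeff_map, coeff_sum_fin a _ k.2, Fin.eta, ← hKry, ← _root_.map_mul]
          exact congrArg φ (mul_comm _ _)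
        have h4 : ∑ k : Fin d, M i k * a k = 0 := by
          have h5 := congrFun ha i
          simpa [Matrix.mulVec, dotProduct] using h5
        calc (∑ k ∈ Finset.range d, (p₀.map φ).coeff k • (A ^ k *ᵥ jR)) i
            = ∑ k ∈ Finset.range d, (p₀.map φ).coeff k * ((A ^ k *ᵥ jR) i) := by
              simp [Finset.sum_apply]
          _ = ∑ k : Fin d, (p₀.map φ).coeff (k : ℕ) * ((A ^ (k : ℕ) *ᵥ jR) i) :=
              (Fin.sum_univ_eq_sum_range _ d).symm
          _ = ∑ k : Fin d, φ (M i k * a k) := Finset.sum_congr rfl fun k _ => hterm k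
          _ = φ (∑ k : Fin d, M i k * a k) := (map_sum φ _ _).symm
          _ = (0 : Fin n → ℝ) i := by rw [h4, map_zero]; rfl
      have h6 := Polynomial.natDegree_le_of_dvd (hfdvd _ hmem) h0
      omega
  -- d ≤ deg g by linear independence transfer
  have hdg : d ≤ g.natDegree := by
    by_contra hlt
    push_neg at hlt
    set c : Fin d → ℝ := fun k => g.coeff (k : ℕ) with hc
    have hMc : M.map φ *ᵥ c = 0 := by
      funext i
      have h5 := congrFun hgmem i
      rw [aeval_mulVec_eq_sum A g jR hlt] at h5
      calc (M.map φ *ᵥ c) i = ∑ k : Fin d, φ (M i k) * c k := by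
            simp [Matrix.mulVec, dotProduct, Matrix.map_apply]
        _ = ∑ k : Fin d, g.coeff (k : ℕ) * ((A ^ (k : ℕ) *ᵥ jR) i) := by
            refine Finset.sum_congr rfl fun k _ => ?_
            rw [hMik, hKry, hc, mul_comm]
        _ = ∑ k ∈ Finset.range d, g.coeff k * ((A ^ k *ᵥ jR) i) :=
            Fin.sum_univ_eq_sum_range (fun k => g.coeff k * ((A ^ k *ᵥ jR) i)) d
        _ = (∑ k ∈ Finset.range d, g.coeff k • (A ^ k *ᵥ jR)) i := by
            simp [Finset.sum_apply]
        _ = 0 := h5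
    have hc0 := mulVec_inj_transfer M hMinj c hMc
    have hg0 : g = 0 := by
      ext m
      rcases lt_or_ge m d with hm | hm
      · have := congrFun hc0 ⟨m, hm⟩
        simpa [hc] using this
      · exact Polynomial.coeff_eq_zero_of_natDegree_lt (by omega)
    exact hgmonic.ne_zero hg0
  -- conclude g = fR
  have hgfR : g = fR := by
    refine Polynomial.eq_of_dvd_of_natDegree_le_of_leadingCoeff hgdvd ?_ ?_
    · rw [hfRdeg]; exact hdg
    · rw [hgmonic.leadingCoeff, hfRmonic.leadingCoeff]
  -- integrality via Gauss's lemma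
  set Bz := G.adjMatrix ℤ with hBz
  have hBzB : Bz.map (algebraMap ℤ ℚ) = B := by
    rw [hBz, hB]
    ext i j
    simp [Matrix.map_apply, SimpleGraph.adjMatrix_apply, apply_ite (algebraMap ℤ ℚ)]
  have hfdvdz : f ∣ Bz.charpoly.map (algebraMap ℤ ℚ) := by
    rw [← Matrix.charpoly_map, hBzB]
    exact hfdvd _ hcharB
  obtain ⟨q, hq⟩ := IsIntegrallyClosed.eq_map_mul_C_of_dvd (K := ℚ) Bz.charpoly_monic hfdvdz
  rw [hfmonic.leadingCoeff, Polynomial.C_1, mul_one] at hq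
  refine ⟨q, ?_⟩
  have hcomp : (algebraMap ℤ ℝ) = φ.comp (algebraMap ℤ ℚ) := RingHom.ext_int _ _
  rw [hcomp, ← Polynomial.map_map, hq, ← hfR]
  exact hgfR.symm
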